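/- For every integer d ≥ 2 and every μ ∈ ℂ, s^{d−1}·I₀(μ,s) converges to (d−2)! as s → 0⁺. -/

import Mathlib

open MeasureTheory Set Filter Real

noncomputable def hconst : ℝ := (1/2) * Real.log (5/3)

lemma hconst_pos : 0 < hconst := by
  have : (1:ℝ) < 5/3 := by norm_num
  have := Real.log_pos this
  unfold hconst; positivity

-- sinh x ≤ x * cosh x for 0 ≤ x
lemma sinh_le_mul_cosh {x : ℝ} (hx : 0 ≤ x) : Real.sinh x ≤ x * Real.cosh x := by
  have key : MonotoneOn (fun x => x * Real.cosh x - Real.sinh x) (Ici (0:ℝ)) := by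
    have hd : ∀ y ∈ interior (Ici (0:ℝ)), HasDerivAt (fun x => x * Real.cosh x - Real.sinh x) (y * Real.sinh y) y := by
      intro y hy
      have h1 : HasDerivAt (fun x : ℝ => x * Real.cosh x) (1 * Real.cosh y + y * Real.sinh y) y :=
        (hasDerivAt_id y).mul (Real.hasDerivAt_cosh y)
      have := h1.sub (Real.hasDerivAt_sinh y)
      exact this.congr_deriv (by ring)
    refine monotoneOn_of_deriv_nonneg (convex_Ici 0) ?_ ?_ ?_
    · exact (continuous_id.mul Real.continuous_cosh).sub Real.continuous_sinh |>.continuousOn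
    · intro y hy; exact (hd y hy).differentiableAt.differentiableWithinAt
    · intro y hy
      rw [(hd y hy).deriv]
      rw [interior_Ici] at hy
      exact mul_nonneg (le_of_lt hy) (Real.sinh_nonneg_iff.mpr hy.le)
  have h0 := key (self_mem_Ici) (mem_Ici.mpr hx) hx
  simp at h0
  linarith

-- coth lower bound: for x>0, 1/x ≤ cosh x / sinh x
lemma one_div_le_coth {x : ℝ} (hx : 0 < x) : x⁻¹ ≤ Real.cosh x / Real.sinh x := by
  have hs : 0 < Real.sinh x := Real.sinh_pos_iff.mpr hx
  rw [inv_eq_one_div, div_le_div_iff₀ hx hs]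
  nlinarith [sinh_le_mul_cosh hx.le]

lemma tendsto_div_sinh {r : ℝ} (hr : 0 < r) :
    Filter.Tendsto (fun s : ℝ => s / Real.sinh (s * r)) (nhdsWithin 0 (Set.Ioi 0)) (nhds r⁻¹) := by
  have hslope : Filter.Tendsto (fun y : ℝ => Real.sinh y / y) (nhdsWithin 0 {(0:ℝ)}ᶜ) (nhds 1) := by
    have := (Real.hasDerivAt_sinh 0)
    rw [hasDerivAt_iff_tendsto_slope] at this
    simp only [Real.cosh_zero] at this
    refine this.congr (fun y => ?_)
    simp [slope_def_field]
  have hmap : Filter.Tendsto (fun s : ℝ => s * r) (nhdsWithin 0 (Set.Ioi 0)) (nhdsWithin 0 {(0:ℝ)}ᶜ) := by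
    refine tendsto_nhdsWithin_of_tendsto_nhds_of_eventually_within _ ?_ ?_
    · have : Filter.Tendsto (fun s : ℝ => s * r) (nhds 0) (nhds 0) := by
        simpa using (continuous_mul_right r).tendsto 0
      exact this.mono_left nhdsWithin_le_nhds
    · filter_upwards [self_mem_nhdsWithin] with s hs
      exact Set.mem_compl_singleton_iff.mpr (mul_pos hs hr).ne'
  have h1 : Filter.Tendsto (fun s : ℝ => Real.sinh (s * r) / (s * r)) (nhdsWithin 0 (Set.Ioi 0)) (nhds 1) :=
    hslope.comp hmap
  have h2 := (tendsto_const_nhds (x := r⁻¹)).div h1 one_ne_zero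
  simp only [div_one] at h2
  refine h2.congr' ?_
  filter_upwards [self_mem_nhdsWithin] with s hs
  have hs' : (0:ℝ) < s := hs
  have : Real.sinh (s*r) ≠ 0 := (Real.sinh_pos_iff.mpr (mul_pos hs' hr)).ne'
  simp only [Pi.div_apply]
  field_simp

noncomputable def cothR (t : ℝ) : ℝ := Real.cosh t / Real.sinh t

noncomputable def I0 (d : ℕ) (μ : ℂ) (s : ℝ) : ℂ :=
  ∫ t in Set.Ioo (0:ℝ) hconst,
    Complex.exp (-(s:ℂ) * (cothR t : ℂ) + μ * (t:ℂ)) / ((Real.sinh t : ℂ))^d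

noncomputable def fI (d : ℕ) (μ : ℂ) (s : ℝ) (t : ℝ) : ℂ :=
  Complex.exp (-(s:ℂ) * (cothR t : ℂ) + μ * (t:ℂ)) / ((Real.sinh t : ℂ))^d

noncomputable def GG (d : ℕ) (μ : ℂ) (s : ℝ) : ℝ → ℂ :=
  Set.indicator (Set.Ioo 0 (hconst / s)) (fun r => (s:ℂ)^d * fI d μ s (s * r))

lemma key (d : ℕ) (hd : 1 ≤ d) (μ : ℂ) {s : ℝ} (hs : 0 < s) :
    ((s:ℂ))^(d-1) * I0 d μ s = ∫ r in Set.Ioi (0:ℝ), GG d μ s r := by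
  have h2 : (∫ r : ℝ, ((Set.Ioo (0:ℝ) hconst).indicator (fI d μ s)) (s * r)) =
      |s⁻¹| • ∫ t, (Set.Ioo (0:ℝ) hconst).indicator (fI d μ s) t :=
    Measure.integral_comp_mul_left _ s
  have h3 : ∀ r : ℝ, ((Set.Ioo (0:ℝ) hconst).indicator (fI d μ s)) (s * r) =
      (Set.Ioo (0:ℝ) (hconst / s)).indicator (fun r => fI d μ s (s * r)) r := by
    intro r
    by_cases hr : r ∈ Set.Ioo (0:ℝ) (hconst / s)
    · rw [Set.indicator_of_mem hr, Set.indicator_of_mem]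
      exact ⟨mul_pos hs hr.1, (lt_div_iff₀' hs).mp hr.2⟩
    · rw [Set.indicator_of_notMem hr, Set.indicator_of_notMem]
      intro hmem
      have hr0 : 0 < r := by nlinarith [hmem.1]
      exact hr ⟨hr0, (lt_div_iff₀' hs).mpr hmem.2⟩
  have h4 : ∫ r in Set.Ioi (0:ℝ), GG d μ s r =
      (s:ℂ)^d * ∫ r in Set.Ioo (0:ℝ) (hconst / s), fI d μ s (s * r) := by
    rw [show (∫ r in Set.Ioi (0:ℝ), GG d μ s r) =
        ∫ r in Set.Ioi (0:ℝ) ∩ Set.Ioo (0:ℝ) (hconst / s), (s:ℂ)^d * fI d μ s (s * r)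
      from setIntegral_indicator measurableSet_Ioo]
    rw [Set.inter_eq_self_of_subset_right (Set.Ioo_subset_Ioi_self), integral_const_mul]
  have h5 : I0 d μ s = (s:ℂ) * ∫ r in Set.Ioo (0:ℝ) (hconst / s), fI d μ s (s * r) := by
    rw [show I0 d μ s = ∫ t, (Set.Ioo (0:ℝ) hconst).indicator (fI d μ s) t
      from (integral_indicator measurableSet_Ioo).symm]
    rw [← integral_indicator measurableSet_Ioo]
    simp_rw [← h3]
    rw [h2, abs_of_pos (inv_pos.mpr hs), Complex.real_smul]
    push_cast
    have hsne : (s:ℂ) ≠ 0 := by exact_mod_cast hs.ne'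
    rw [← mul_assoc, mul_inv_cancel₀ hsne, one_mul]
  rw [h5, h4, ← mul_assoc, ← pow_succ, Nat.sub_add_cancel hd]

lemma GG_tendsto (d : ℕ) (μ : ℂ) {r : ℝ} (hr : 0 < r) :
    Filter.Tendsto (fun s : ℝ => GG d μ s r) (nhdsWithin 0 (Set.Ioi 0))
      (nhds (((Real.exp (-r⁻¹) / r ^ d : ℝ) : ℂ))) := by
  have hlim1 : Filter.Tendsto (fun s : ℝ => ((s / Real.sinh (s*r) : ℝ) : ℂ))
      (nhdsWithin 0 (Set.Ioi 0)) (nhds ((r⁻¹ : ℝ) : ℂ)) :=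
    (Complex.continuous_ofReal.tendsto _).comp (tendsto_div_sinh hr)
  have hlim2 : Filter.Tendsto (fun s : ℝ => ((Real.cosh (s*r) : ℝ) : ℂ))
      (nhdsWithin 0 (Set.Ioi 0)) (nhds 1) := by
    have hc : Continuous (fun s : ℝ => ((Real.cosh (s*r) : ℝ) : ℂ)) :=
      Complex.continuous_ofReal.comp (Real.continuous_cosh.comp
        (continuous_id.mul continuous_const))
    exact (hc.tendsto' 0 1 (by simp)).mono_left nhdsWithin_le_nhds
  have hlim3 : Filter.Tendsto (fun s : ℝ => ((s * r : ℝ) : ℂ))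
      (nhdsWithin 0 (Set.Ioi 0)) (nhds 0) := by
    have hc : Continuous (fun s : ℝ => ((s * r : ℝ) : ℂ)) :=
      Complex.continuous_ofReal.comp (continuous_id.mul continuous_const)
    exact (hc.tendsto' 0 0 (by simp)).mono_left nhdsWithin_le_nhds
  have hmain : Filter.Tendsto (fun s : ℝ =>
      ((s / Real.sinh (s*r) : ℝ) : ℂ)^d *
        Complex.exp (-((Real.cosh (s*r) : ℝ) : ℂ) * ((s / Real.sinh (s*r) : ℝ) : ℂ)
          + μ * ((s * r : ℝ) : ℂ)))
      (nhdsWithin 0 (Set.Ioi 0))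
      (nhds (((r⁻¹ : ℝ) : ℂ)^d * Complex.exp (-(1:ℂ) * ((r⁻¹ : ℝ) : ℂ) + μ * 0))) := by
    exact (hlim1.pow d).mul (Complex.continuous_exp.tendsto _ |>.comp
      (((hlim2.neg.mul hlim1)).add (tendsto_const_nhds.mul hlim3)))
  have hval : ((r⁻¹ : ℝ) : ℂ)^d * Complex.exp (-(1:ℂ) * ((r⁻¹ : ℝ) : ℂ) + μ * 0)
      = ((Real.exp (-r⁻¹) / r ^ d : ℝ) : ℂ) := by
    rw [Complex.ofReal_div, Complex.ofReal_exp, Complex.ofReal_pow, Complex.ofReal_neg,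
      Complex.ofReal_inv]
    rw [show -(1:ℂ) * (↑r)⁻¹ + μ * 0 = -(↑r)⁻¹ by ring, inv_pow]
    ring
  rw [hval] at hmain
  refine Filter.Tendsto.congr' ?_ hmain
  filter_upwards [Ioo_mem_nhdsGT_of_mem (Set.mem_Ico.mpr
    ⟨le_refl (0:ℝ), div_pos hconst_pos hr⟩)] with s hs
  have hs0 : 0 < s := hs.1
  have hmem : r ∈ Set.Ioo (0:ℝ) (hconst / s) :=
    ⟨hr, (lt_div_iff₀' hs0).mpr ((lt_div_iff₀ hr).mp hs.2)⟩
  rw [GG, Set.indicator_of_mem hmem]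
  show _ = (s:ℂ)^d * fI d μ s (s*r)
  rw [fI, cothR]
  push_cast
  rw [show -Complex.cosh ((s:ℂ) * r) * ((s:ℂ) / Complex.sinh ((s:ℂ)*r))
      = -(s:ℂ) * (Complex.cosh ((s:ℂ)*r) / Complex.sinh ((s:ℂ)*r)) by ring]
  ring

lemma GG_bound (d : ℕ) (μ : ℂ) {s : ℝ} (hs : 0 < s) {r : ℝ} (hr : 0 < r) :
    ‖GG d μ s r‖ ≤ Real.exp (‖μ‖ * hconst) * (Real.exp (-r⁻¹) / r ^ d) := by
  have hRHS : 0 ≤ Real.exp (‖μ‖ * hconst) * (Real.exp (-r⁻¹) / r ^ d) := by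
    positivity
  rw [GG]
  by_cases hmem : r ∈ Set.Ioo (0:ℝ) (hconst / s)
  swap
  · rw [Set.indicator_of_notMem hmem]; simpa using hRHS
  rw [Set.indicator_of_mem hmem]
  have hsr : 0 < s * r := mul_pos hs hr
  have hsinh : 0 < Real.sinh (s * r) := Real.sinh_pos_iff.mpr hsr
  have hsrh : s * r < hconst := (lt_div_iff₀' hs).mp hmem.2
  -- compute the norm
  have hnorm : ‖(s:ℂ)^d * fI d μ s (s*r)‖ =
      (s / Real.sinh (s*r))^d *
        Real.exp (-(s * cothR (s*r)) + μ.re * (s*r)) := by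
    rw [fI, norm_mul, norm_div, norm_pow, norm_pow, Complex.norm_exp]
    have hre : (-(s:ℂ) * (cothR (s*r) : ℂ) + μ * ((s*r : ℝ):ℂ)).re
        = -(s * cothR (s*r)) + μ.re * (s*r) := by
      simp [Complex.add_re, Complex.mul_re]
    rw [hre, Complex.norm_real, Complex.norm_real, Real.norm_eq_abs, Real.norm_eq_abs, abs_of_pos hs, abs_of_pos hsinh,
      div_pow]
    ring
  rw [hnorm]
  have h1 : s / Real.sinh (s*r) ≤ r⁻¹ := by
    have hle : s * r ≤ Real.sinh (s * r) := (Real.self_lt_sinh_iff.mpr hsr).le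
    calc s / Real.sinh (s*r) ≤ s / (s * r) :=
          div_le_div_of_nonneg_left hs.le hsr hle
      _ = r⁻¹ := by field_simp
  have h2 : -(s * cothR (s*r)) + μ.re * (s*r) ≤ -r⁻¹ + ‖μ‖ * hconst := by
    have hcoth : r⁻¹ ≤ s * cothR (s*r) := by
      have := one_div_le_coth hsr
      rw [cothR]
      calc r⁻¹ = s * (s * r)⁻¹ := by field_simp
        _ ≤ s * (Real.cosh (s*r) / Real.sinh (s*r)) := by
            exact mul_le_mul_of_nonneg_left this hs.le
    have hre2 : μ.re * (s*r) ≤ ‖μ‖ * hconst := by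
      calc μ.re * (s*r) ≤ |μ.re| * (s*r) :=
            mul_le_mul_of_nonneg_right (le_abs_self _) hsr.le
        _ ≤ ‖μ‖ * hconst :=
            mul_le_mul (Complex.abs_re_le_norm μ) hsrh.le hsr.le (norm_nonneg μ)
    linarith
  calc (s / Real.sinh (s*r))^d * Real.exp (-(s * cothR (s*r)) + μ.re * (s*r))
      ≤ (r⁻¹)^d * Real.exp (-r⁻¹ + ‖μ‖ * hconst) := by
        refine mul_le_mul (pow_le_pow_left₀ (by positivity) h1 d)
          (Real.exp_le_exp.mpr h2) (Real.exp_pos _).le (by positivity)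
    _ = Real.exp (‖μ‖ * hconst) * (Real.exp (-r⁻¹) / r ^ d) := by
        rw [Real.exp_add, inv_pow]
        ring

lemma GG_meas (d : ℕ) (μ : ℂ) (s : ℝ) :
    AEStronglyMeasurable (GG d μ s) (volume.restrict (Set.Ioi 0)) := by
  have m1 : Measurable (fun r : ℝ => s * r) := measurable_id.const_mul s
  have msinh : Measurable (fun r : ℝ => ((Real.sinh (s*r) : ℝ) : ℂ)) :=
    Complex.measurable_ofReal.comp (Real.continuous_sinh.measurable.comp m1)
  have mcoth : Measurable (fun r : ℝ => ((cothR (s*r) : ℝ) : ℂ)) := by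
    unfold cothR
    exact Complex.measurable_ofReal.comp
      ((Real.continuous_cosh.measurable.comp m1).div (Real.continuous_sinh.measurable.comp m1))
  have marg : Measurable (fun r : ℝ =>
      -(s:ℂ) * ((cothR (s*r) : ℝ) : ℂ) + μ * ((s*r : ℝ) : ℂ)) :=
    (mcoth.const_mul (-(s:ℂ))).add ((Complex.measurable_ofReal.comp m1).const_mul μ)
  have hm : Measurable (fun r : ℝ => (s:ℂ)^d * fI d μ s (s * r)) := by
    unfold fI
    exact ((Complex.measurable_exp.comp marg).div (msinh.pow_const d)).const_mul _
  exact (hm.indicator measurableSet_Ioo).aestronglyMeasurable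

lemma Jint (d : ℕ) (hd : 2 ≤ d) :
    IntegrableOn (fun r : ℝ => Real.exp (-r⁻¹) / r ^ d) (Set.Ioi 0) ∧
    ∫ r in Set.Ioi (0:ℝ), Real.exp (-r⁻¹) / r ^ d = (Nat.factorial (d-2) : ℝ) := by
  set g : ℝ → ℝ := fun r => Real.exp (-r⁻¹) / r ^ d with hg
  have hderiv : ∀ x ∈ Set.Ioi (0:ℝ),
      HasDerivWithinAt (fun u : ℝ => u⁻¹) (-((x:ℝ)^2)⁻¹) (Set.Ioi 0) x :=
    fun x hx => (hasDerivAt_inv (ne_of_gt hx)).hasDerivWithinAt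
  have hinj : Set.InjOn (fun u : ℝ => u⁻¹) (Set.Ioi 0) :=
    fun a _ b _ h => inv_injective h
  have himg : (fun u : ℝ => u⁻¹) '' Set.Ioi 0 = Set.Ioi 0 := by
    ext y
    constructor
    · rintro ⟨x, hx, rfl⟩; exact mem_Ioi.mpr (inv_pos.mpr (mem_Ioi.mp hx))
    · intro hy; exact ⟨y⁻¹, mem_Ioi.mpr (inv_pos.mpr (mem_Ioi.mp hy)), inv_inv y⟩
  have heq : Set.EqOn (fun x : ℝ => |(-((x:ℝ)^2)⁻¹)| • g x⁻¹)
      (fun x : ℝ => Real.exp (-x) * x ^ ((d:ℝ) - 1 - 1)) (Set.Ioi 0) := by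
    intro x hx
    have hx0 : (0:ℝ) < x := hx
    simp only [hg, smul_eq_mul, abs_neg, abs_inv, inv_inv]
    rw [show ((d:ℝ) - 1 - 1) = ((d - 2 : ℕ) : ℝ) by
      push_cast [Nat.cast_sub hd]; ring]
    rw [Real.rpow_natCast]
    rw [show x ^ (d - 2) = x ^ d * (x ^ 2)⁻¹ from (pow_sub₀ x hx0.ne' hd)]
    rw [abs_of_pos (by positivity : (0:ℝ) < x ^ 2)]
    field_simp
    rw [one_div, inv_pow, inv_mul_cancel₀ (by positivity)]
  have hIJ : IntegrableOn (fun x : ℝ => Real.exp (-x) * x ^ ((d:ℝ) - 1 - 1)) (Set.Ioi 0) :=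
    Real.GammaIntegral_convergent (by
      have : (2:ℝ) ≤ d := by exact_mod_cast hd
      linarith)
  have hint : IntegrableOn g (Set.Ioi 0) := by
    rw [show Set.Ioi (0:ℝ) = (fun u : ℝ => u⁻¹) '' Set.Ioi 0 from himg.symm,
      integrableOn_image_iff_integrableOn_abs_deriv_smul measurableSet_Ioi hderiv hinj]
    exact hIJ.congr_fun heq.symm measurableSet_Ioi
  refine ⟨hint, ?_⟩
  rw [show (∫ r in Set.Ioi (0:ℝ), g r) = ∫ r in (fun u : ℝ => u⁻¹) '' Set.Ioi 0, g r by
    rw [himg]]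
  rw [integral_image_eq_integral_abs_deriv_smul measurableSet_Ioi hderiv hinj g]
  rw [setIntegral_congr_fun measurableSet_Ioi heq]
  rw [← Real.Gamma_eq_integral (by
      have : (2:ℝ) ≤ d := by exact_mod_cast hd
      linarith : (0:ℝ) < (d:ℝ) - 1)]
  rw [show ((d:ℝ) - 1) = ((d - 2 : ℕ) : ℝ) + 1 by push_cast [Nat.cast_sub hd]; ring]
  exact Real.Gamma_nat_eq_factorial (d - 2)

theorem stmt7 (d : ℕ) (hd : 2 ≤ d) (μ : ℂ) :
    Filter.Tendsto (fun s : ℝ => ((s:ℂ))^(d-1) * I0 d μ s)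
      (nhdsWithin 0 (Set.Ioi 0)) (nhds ((Nat.factorial (d-2) : ℂ))) := by
  set C : ℝ := Real.exp (‖μ‖ * hconst) with hC
  have hmeas : ∀ᶠ s : ℝ in nhdsWithin 0 (Set.Ioi 0),
      AEStronglyMeasurable (GG d μ s) (volume.restrict (Set.Ioi 0)) :=
    Filter.Eventually.of_forall (fun s => GG_meas d μ s)
  have hbound : ∀ᶠ s : ℝ in nhdsWithin 0 (Set.Ioi 0),
      ∀ᵐ r ∂(volume.restrict (Set.Ioi 0)),
        ‖GG d μ s r‖ ≤ C * (Real.exp (-r⁻¹) / r ^ d) := by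
    filter_upwards [self_mem_nhdsWithin] with s hs
    rw [ae_restrict_iff' measurableSet_Ioi]
    exact ae_of_all _ (fun r hr => GG_bound d μ hs hr)
  have hint : Integrable (fun r : ℝ => C * (Real.exp (-r⁻¹) / r ^ d))
      (volume.restrict (Set.Ioi 0)) := (Jint d hd).1.const_mul C
  have hlim : ∀ᵐ r ∂(volume.restrict (Set.Ioi 0)),
      Filter.Tendsto (fun s : ℝ => GG d μ s r) (nhdsWithin 0 (Set.Ioi 0))
        (nhds (((Real.exp (-r⁻¹) / r ^ d : ℝ) : ℂ))) := by
    rw [ae_restrict_iff' measurableSet_Ioi]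
    exact ae_of_all _ (fun r hr => GG_tendsto d μ hr)
  have h8 := tendsto_integral_filter_of_dominated_convergence
    (μ := volume.restrict (Set.Ioi 0)) _ hmeas hbound hint hlim
  have hval : (∫ r in Set.Ioi (0:ℝ), ((Real.exp (-r⁻¹) / r ^ d : ℝ) : ℂ))
      = (Nat.factorial (d-2) : ℂ) := by
    have h9 := integral_ofReal (𝕜 := ℂ) (μ := volume.restrict (Set.Ioi 0))
      (f := fun r => Real.exp (-r⁻¹) / r ^ d)
    rw [show (fun r : ℝ => ((Real.exp (-r⁻¹) / r ^ d : ℝ) : ℂ))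
        = fun r : ℝ => (RCLike.ofReal (K := ℂ) (Real.exp (-r⁻¹) / r ^ d)) from rfl,
      h9, (Jint d hd).2]
    norm_cast
  rw [hval] at h8
  refine Filter.Tendsto.congr' ?_ h8
  filter_upwards [self_mem_nhdsWithin] with s hs
  exact (key d (le_trans (by norm_num) hd) μ hs).symm
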